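/- arXiv:2304.08093 — 6 statements merged into one kernel-verified Lean document; each statement's English description precedes it below -/
import Mathlib

section
/- Let Γ be a finite simple graph with vertex set V, |V| = n ≥ 3, and edge set E regarded as a set of 2-element subsets of V. Let K_Γ = (V, {{v} | v ∈ V} ∪ E, ∋) be the formal context whose objects are the vertices, whose attributes are the singleton vertex sets together with the edges, and where a vertex is incident with an attribute iff it is an element of it. Then there exists a surjective scale-measure from K_Γ into the crown scale C_n if and only if Γ has a Hamiltonian cycle. -/
/-- The intent (common attributes) of a set of objects. -/
def intentOf {G M : Type*} (Inc : G → M → Prop) (A : Set G) : Set M :=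
  {m | ∀ g ∈ A, Inc g m}

/-- The extent (common objects) of a set of attributes. -/
def extentOf {G M : Type*} (Inc : G → M → Prop) (B : Set M) : Set G :=
  {g | ∀ m ∈ B, Inc g m}

/-- The set of extents of the formal context `(G, M, Inc)`. -/
def Extents {G M : Type*} (Inc : G → M → Prop) : Set (Set G) :=
  {A | extentOf Inc (intentOf Inc A) = A}

/-- The object closure operator `φ` of a formal context: `φ(A) = A''`. -/
def closureK {G M : Type*} (Inc : G → M → Prop) (A : Set G) : Set G :=
  extentOf Inc (intentOf Inc A)

/-- `σ` is a scale-measure from `(G,M,Inc)` into `(GS,MS,IncS)`. -/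
def IsScaleMeasure {G M GS MS : Type*} (Inc : G → M → Prop) (IncS : GS → MS → Prop)
    (σ : G → GS) : Prop :=
  ∀ A ∈ Extents IncS, σ ⁻¹' A ∈ Extents Inc

/-- `σ` is a full scale-measure from `(G,M,Inc)` into `(GS,MS,IncS)`. -/
def IsFullScaleMeasure {G M GS MS : Type*} (Inc : G → M → Prop) (IncS : GS → MS → Prop)
    (σ : G → GS) : Prop :=
  IsScaleMeasure Inc IncS σ ∧ Extents Inc = (fun A => σ ⁻¹' A) '' Extents IncS

/-- The incidence of the induced subcontext `K[H, M]`. -/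
def subInc {G M : Type*} (Inc : G → M → Prop) (H : Set G) : ↥H → M → Prop :=
  fun h m => Inc h.1 m

/-- `σ : H → GS` is a local full scale-measure from `K` into `S`, i.e. a full
scale-measure from `K[H,M]` into `S`. -/
def IsLocalFullScaleMeasure {G M GS MS : Type*} (Inc : G → M → Prop) (H : Set G)
    (IncS : GS → MS → Prop) (σ : ↥H → GS) : Prop :=
  IsFullScaleMeasure (subInc Inc H) IncS σ

/-- Nominal scale `N_n = ([n],[n],=)` (objects/attributes modelled by `Fin n`). -/
def nominalInc (n : ℕ) : Fin n → Fin n → Prop := fun a b => a = b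

/-- Contranominal scale `B_n = ([n],[n],≠)`. -/
def contranominalInc (n : ℕ) : Fin n → Fin n → Prop := fun a b => a ≠ b

/-- Ordinal scale `O_n = ([n],[n],≤)`. -/
def ordinalInc (n : ℕ) : Fin n → Fin n → Prop := fun a b => a ≤ b

/-- Interordinal scale `I_n = ([n],[n],≤) | ([n],[n],≥)`. -/
def interordinalInc (n : ℕ) : Fin n → Fin n ⊕ Fin n → Prop :=
  fun g m => Sum.elim (fun a => g ≤ a) (fun a => a ≤ g) m

/-- Crown scale `C_n = ([n],[n],J)` with `(a,b) ∈ J` iff `a = b`, `b = a+1`, or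
`(a,b) = (n,1)` (here `Fin n` is `0`-indexed, so `(n,1)` becomes `(n-1,0)`). -/
def crownInc (n : ℕ) : Fin n → Fin n → Prop :=
  fun a b => a = b ∨ (b : ℕ) = (a : ℕ) + 1 ∨ ((a : ℕ) = n - 1 ∧ (b : ℕ) = 0)


section Aux

open SimpleGraph Function

/-! ### General FCA lemmas -/

section FCA
variable {G M : Type*} {Inc : G → M → Prop}

lemma subset_closureK' (A : Set G) : A ⊆ closureK Inc A :=
  fun g hg m hm => hm g hg

lemma closureK_mono' {A B : Set G} (h : A ⊆ B) : closureK Inc A ⊆ closureK Inc B :=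
  fun g hg m hm => hg m (fun x hx => hm x (h hx))

lemma mem_Extents_of_subset' {A : Set G} (h : closureK Inc A ⊆ A) : A ∈ Extents Inc :=
  Set.Subset.antisymm h (subset_closureK' A)

lemma extent_mem_Extents' (B : Set M) : extentOf Inc B ∈ Extents Inc := by
  apply mem_Extents_of_subset'
  intro g hg m hm
  exact hg m (fun x hx => hx m hm)

lemma iInter_mem_Extents' {ι : Sort*} (A : ι → Set G) (h : ∀ i, A i ∈ Extents Inc) :
    (⋂ i, A i) ∈ Extents Inc := by
  apply mem_Extents_of_subset'
  intro g hg
  refine Set.mem_iInter.2 fun i => ?_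
  have hsub : closureK Inc (⋂ j, A j) ⊆ closureK Inc (A i) :=
    closureK_mono' (Set.iInter_subset A i)
  rw [show closureK Inc (A i) = A i from h i] at hsub
  exact hsub hg

lemma extentOf_eq_iInter' (B : Set M) :
    extentOf Inc B = ⋂ (m : B), {g | Inc g m.1} := by
  ext g
  simp only [extentOf, Set.mem_iInter, Set.mem_setOf_eq, Subtype.forall]

end FCA

/-! ### Crown scale lemmas -/

section Crown
variable {n : ℕ} [NeZero n]

lemma fin_val_one' (hn : 3 ≤ n) : ((1 : Fin n) : ℕ) = 1 := by
  rw [Fin.val_one']; exact Nat.mod_eq_of_lt (by omega)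

lemma fin_val_add_one'' (hn : 3 ≤ n) (a : Fin n) :
    ((a + 1 : Fin n) : ℕ) = ((a : ℕ) + 1) % n := by
  rw [Fin.val_add, fin_val_one' hn]

lemma crown_iff' (hn : 3 ≤ n) (a b : Fin n) : crownInc n a b ↔ b = a ∨ b = a + 1 := by
  have hadd := fin_val_add_one'' hn a
  have ha : (a : ℕ) < n := a.isLt
  constructor
  · rintro (h | h | ⟨h1', h2⟩)
    · exact Or.inl h.symm
    · right; apply Fin.ext; rw [hadd, Nat.mod_eq_of_lt (by omega)]; omega
    · right; apply Fin.ext; rw [hadd, h1', show n - 1 + 1 = n by omega, Nat.mod_self]; omega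
  · rintro (rfl | rfl)
    · exact Or.inl rfl
    · rcases Nat.lt_or_ge ((a : ℕ) + 1) n with h | h
      · right; left; rw [hadd, Nat.mod_eq_of_lt h]
      · right; right
        have han : (a : ℕ) = n - 1 := by omega
        exact ⟨han, by rw [hadd, han, show n - 1 + 1 = n by omega, Nat.mod_self]⟩

lemma fin_one_ne_zero' (hn : 3 ≤ n) : (1 : Fin n) ≠ 0 := by
  intro h
  have := congrArg Fin.val h
  rw [fin_val_one' hn] at this
  simp at this

lemma fin_ne_add_one' (hn : 3 ≤ n) (a : Fin n) : a ≠ a + 1 := by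
  intro h
  have h0 : (1 : Fin n) = 0 := by
    have := congrArg (fun x => x - a) h
    simpa [sub_eq_iff_eq_add] using this.symm
  exact fin_one_ne_zero' hn h0

end Crown

/-! ### Building a hamiltonian cycle from a cyclic ordering -/

section BridgeA
variable {V : Type*} [Fintype V] [DecidableEq V] {Γ : SimpleGraph V} {n : ℕ} [NeZero n]

/-- the walk visiting `f 0, f 1, ..., f k` -/
def buildWalk (f : ℕ → V) (hadj : ∀ k : ℕ, Γ.Adj (f k) (f (k+1))) :
    (k : ℕ) → Γ.Walk (f 0) (f k)
  | 0 => Walk.nil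
  | (k+1) => (buildWalk f hadj k).concat (hadj k)

omit [Fintype V] [DecidableEq V] [NeZero n] in
lemma buildWalk_support (f : ℕ → V) (hadj : ∀ k : ℕ, Γ.Adj (f k) (f (k+1))) (k : ℕ) :
    (buildWalk f hadj k).support = (List.range (k+1)).map f := by
  induction k with
  | zero => rfl
  | succ k ih =>
      rw [buildWalk, Walk.support_concat, ih, List.range_succ (n := k+1)]
      simp

omit [Fintype V] [DecidableEq V] [NeZero n] in
lemma buildWalk_edges (f : ℕ → V) (hadj : ∀ k : ℕ, Γ.Adj (f k) (f (k+1))) (k : ℕ) :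
    (buildWalk f hadj k).edges = (List.range k).map (fun j => s(f j, f (j+1))) := by
  induction k with
  | zero => simp [buildWalk]
  | succ k ih =>
      rw [buildWalk, Walk.edges_concat, ih, List.range_succ (n := k)]
      simp

open Fin.NatCast in
omit [Fintype V] [DecidableEq V] in
lemma nat_cast_succ_fin (k : ℕ) : ((k+1 : ℕ) : Fin n) = (k : Fin n) + 1 := by
  push_cast
  ring

open Fin.NatCast in
lemma exists_ham_of_cyclic (hn : 3 ≤ n) (hcard : Fintype.card V = n)
    (τ : Fin n → V) (hbij : Bijective τ) (hadj : ∀ i : Fin n, Γ.Adj (τ i) (τ (i+1))) :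
    ∃ (v : V) (w : Γ.Walk v v), w.IsHamiltonianCycle := by
  set f : ℕ → V := fun k => τ (k : Fin n) with hf
  have hadj' : ∀ k : ℕ, Γ.Adj (f k) (f (k+1)) := by
    intro k
    have : f (k+1) = τ ((k : Fin n) + 1) := by rw [hf]; simp only [nat_cast_succ_fin]
    rw [this]
    exact hadj _
  have hfn : f n = f 0 := by simp [hf, Fin.natCast_self]
  set W : Γ.Walk (f 0) (f n) := buildWalk f hadj' n with hW
  set C : Γ.Walk (f 0) (f 0) := W.copy rfl hfn with hC
  have hfinj : ∀ j < n, ∀ k < n, f j = f k → j = k := by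
    intro j hj k hk h
    have := congrArg Fin.val (hbij.injective h)
    rwa [Fin.val_natCast, Fin.val_natCast, Nat.mod_eq_of_lt hj, Nat.mod_eq_of_lt hk] at this
  have hfinj' : ∀ j, 1 ≤ j → j ≤ n → ∀ k, 1 ≤ k → k ≤ n → f j = f k → j = k := by
    intro j hj1 hjn k hk1 hkn h
    have := congrArg Fin.val (hbij.injective h)
    rw [Fin.val_natCast, Fin.val_natCast] at this
    rcases Nat.lt_or_ge j n with hj | hj <;> rcases Nat.lt_or_ge k n with hk | hk
    · rwa [Nat.mod_eq_of_lt hj, Nat.mod_eq_of_lt hk] at this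
    · have hkn' : k = n := by omega
      rw [Nat.mod_eq_of_lt hj, hkn', Nat.mod_self] at this; omega
    · have hjn' : j = n := by omega
      rw [hjn', Nat.mod_self, Nat.mod_eq_of_lt hk] at this; omega
    · omega
  have hsupC : C.support = (List.range (n+1)).map f := by
    rw [hC, Walk.support_copy, hW, buildWalk_support]
  have htail : C.support.tail = (List.range n).map (fun k => f (k+1)) := by
    rw [hsupC, List.range_succ_eq_map]
    simp [List.map_map, Function.comp_def]
  have htail_nodup : C.support.tail.Nodup := by
    rw [htail]
    apply List.Nodup.map_on _ (List.nodup_range (n := n))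
    intro j hj k hk h
    rw [List.mem_range] at hj hk
    have := hfinj' (j+1) (by omega) (by omega) (k+1) (by omega) (by omega) h
    omega
  have htail_mem : ∀ a : V, a ∈ C.support.tail := by
    intro a
    obtain ⟨i, rfl⟩ := hbij.surjective a
    rw [htail, List.mem_map]
    refine ⟨if (i : ℕ) = 0 then n - 1 else (i : ℕ) - 1, ?_, ?_⟩
    · rw [List.mem_range]; split <;> omega
    · show τ ((((if (i : ℕ) = 0 then n - 1 else (i : ℕ) - 1) + 1 : ℕ)) : Fin n) = τ i
      congr 1
      apply Fin.ext
      rw [Fin.val_natCast]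
      split
      next h0 => rw [show n - 1 + 1 = n by omega, Nat.mod_self]; omega
      next h0 => rw [show (i : ℕ) - 1 + 1 = (i : ℕ) by omega, Nat.mod_eq_of_lt i.isLt]
  have hedges : C.edges = (List.range n).map (fun j => s(f j, f (j+1))) := by
    rw [hC, Walk.edges_copy, hW, buildWalk_edges]
  have hedges_nodup : C.edges.Nodup := by
    rw [hedges]
    apply List.Nodup.map_on _ (List.nodup_range (n := n))
    intro j hj k hk h
    rw [List.mem_range] at hj hk
    rw [Sym2.eq_iff] at h
    rcases h with ⟨h1, h2⟩ | ⟨h1, h2⟩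
    · exact hfinj j hj k hk h1
    · exfalso
      have e1 : (j : Fin n) = (k : Fin n) + 1 := by
        have := hbij.injective h1
        rwa [nat_cast_succ_fin] at this
      have e2 : (k : Fin n) = (j : Fin n) + 1 := by
        have := hbij.injective h2.symm
        rwa [nat_cast_succ_fin] at this
      rw [e2] at e1
      have hval : ((j : Fin n) + 1 + 1 : Fin n).val = (j : Fin n).val := by rw [← e1]
      have hv1 : ((1 : Fin n) : ℕ) = 1 := by
        rw [Fin.val_one']; exact Nat.mod_eq_of_lt (by omega)
      have hjv : ((j : Fin n) : ℕ) < n := Fin.isLt _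
      rw [Fin.val_add, Fin.val_add, hv1] at hval
      rcases Nat.lt_or_ge (((j : Fin n) : ℕ) + 1) n with hlt | hge
      · rw [Nat.mod_eq_of_lt hlt] at hval
        rcases Nat.lt_or_ge (((j : Fin n) : ℕ) + 1 + 1) n with hlt2 | hge2
        · rw [Nat.mod_eq_of_lt hlt2] at hval; omega
        · rw [show ((j : Fin n) : ℕ) + 1 + 1 = n by omega, Nat.mod_self] at hval
          omega
      · rw [show ((j : Fin n) : ℕ) + 1 = n by omega, Nat.mod_self,
          Nat.mod_eq_of_lt (by omega : 0 + 1 < n)] at hval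
        omega
  have hlen : C.support.tail.length = n := by rw [htail]; simp
  have hCne : C ≠ Walk.nil := by
    intro h
    rw [h] at hlen
    simp [Walk.support_nil] at hlen
    omega
  refine ⟨f 0, C, ?_⟩
  rw [Walk.isHamiltonianCycle_iff_isCycle_and_support_count_tail_eq_one]
  refine ⟨⟨⟨⟨hedges_nodup⟩, hCne⟩, htail_nodup⟩,
    fun a => List.count_eq_one_of_mem htail_nodup (htail_mem a)⟩

end BridgeA

/-! ### Extracting a cyclic ordering from a hamiltonian cycle -/

section BridgeB
variable {V : Type*} [Fintype V] [DecidableEq V] {Γ : SimpleGraph V} {n : ℕ} [NeZero n]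

lemma cyclic_of_ham (hn : 3 ≤ n) (hcard : Fintype.card V = n)
    {v : V} (w : Γ.Walk v v) (hw : w.IsHamiltonianCycle) :
    ∃ τ : Fin n → V, Bijective τ ∧ ∀ i : Fin n, Γ.Adj (τ i) (τ (i+1)) := by
  set L : List V := w.support.tail with hL
  have hnotnil := hw.isCycle.not_nil
  have hsup : w.support = v :: L := w.support_eq_cons
  have hLlen : L.length = n := by
    have h1 : w.length = n := by rw [hw.length_eq, hcard]
    have h2 : w.support.length = w.length + 1 := w.length_support
    rw [hsup] at h2
    simp at h2
    omega
  have hLnodup : L.Nodup := hw.isCycle.support_nodup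
  have hLne : L ≠ [] := by intro h; rw [h] at hLlen; simp at hLlen; omega
  have hlast : L.getLast hLne = v := by
    have h2 := w.getLast_support
    simp only [hsup] at h2
    rwa [List.getLast_cons hLne] at h2
  have hchain : List.Chain' Γ.Adj (v :: L) := by rw [← hsup]; exact w.isChain_adj_support
  have hchain' : ∀ i (h : i < (v :: L).length - 1), Γ.Adj ((v :: L).get ⟨i, by omega⟩)
      ((v :: L).get ⟨i + 1, by omega⟩) := fun i h => List.isChain_iff_getElem.1 hchain i (by omega)
  have hv1 : ((1 : Fin n) : ℕ) = 1 := by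
    rw [Fin.val_one']; exact Nat.mod_eq_of_lt (by omega)
  refine ⟨fun i => L.get ⟨i.val, by rw [hLlen]; exact i.isLt⟩, ?_, ?_⟩
  · rw [Fintype.bijective_iff_injective_and_card]
    constructor
    · intro i j h
      have := (hLnodup.get_inj_iff).1 h
      exact Fin.ext (by simpa using congrArg Fin.val this)
    · rw [hcard, Fintype.card_fin]
  · intro i
    show Γ.Adj (L.get ⟨(i : ℕ), by rw [hLlen]; exact i.isLt⟩)
      (L.get ⟨((i+1 : Fin n) : ℕ), by rw [hLlen]; exact (i+1).isLt⟩)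
    have hi : i.val < n := i.isLt
    have hadd : ((i + 1 : Fin n) : ℕ) = (i.val + 1) % n := by rw [Fin.val_add, hv1]
    rcases Nat.lt_or_ge (i.val + 1) n with hlt | hge
    · have h := hchain' (i.val + 1)
        (by simp only [List.length_cons, hLlen, Nat.add_sub_cancel]; omega)
      have e1 : (v :: L).get ⟨i.val + 1, by simp only [List.length_cons, hLlen]; omega⟩
          = L.get ⟨i.val, by rw [hLlen]; exact i.isLt⟩ := rfl
      have e2 : (v :: L).get ⟨i.val + 1 + 1, by simp only [List.length_cons, hLlen]; omega⟩
          = L.get ⟨i.val + 1, by rw [hLlen]; omega⟩ := rfl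
      rw [e1, e2] at h
      convert h using 2
      exact Fin.ext (by simp only [hadd, Nat.mod_eq_of_lt hlt])
    · have hivn : i.val = n - 1 := by omega
      have hiv0 : ((i + 1 : Fin n) : ℕ) = 0 := by
        rw [hadd, show i.val + 1 = n by omega, Nat.mod_self]
      have hgetlast : L.get ⟨i.val, by rw [hLlen]; exact i.isLt⟩ = v := by
        rw [← hlast, List.getLast_eq_getElem, List.get_eq_getElem]
        congr 1
        show i.val = L.length - 1; rw [hLlen]; omega
      have h := hchain' 0 (by simp only [List.length_cons, hLlen, Nat.add_sub_cancel]; omega)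
      have e1 : (v :: L).get ⟨0, by simp only [List.length_cons]; omega⟩ = v := rfl
      have e2 : (v :: L).get ⟨0 + 1, by simp only [List.length_cons, hLlen]; omega⟩
          = L.get ⟨0, by rw [hLlen]; omega⟩ := rfl
      rw [e1, e2] at h
      rw [hgetlast]
      convert h using 2
      exact Fin.ext (by simp only [hiv0])

end BridgeB

/-! ### Lemmas about the graph context -/

section GraphContext
variable {V : Type*} [Fintype V] [DecidableEq V] (Γ : SimpleGraph V)

lemma pair_mem_Extents_gr {u v : V} (h : Γ.Adj u v) :
    ({u, v} : Set V) ∈ Extents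
      (fun (v : V) (a : V ⊕ Γ.edgeSet) =>
        Sum.elim (fun w => v = w) (fun e => v ∈ (e : Sym2 V)) a) := by
  apply mem_Extents_of_subset'
  intro g hg
  have hm : (Sum.inr ⟨s(u,v), h⟩ : V ⊕ Γ.edgeSet) ∈ intentOf
      (fun (v : V) (a : V ⊕ Γ.edgeSet) =>
        Sum.elim (fun w => v = w) (fun e => v ∈ (e : Sym2 V)) a) {u, v} := by
    intro x hx
    simp only [Set.mem_insert_iff, Set.mem_singleton_iff] at hx
    rcases hx with rfl | rfl
    · show x ∈ s(x, v)
      exact Sym2.mem_mk_left x v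
    · show x ∈ s(u, x)
      exact Sym2.mem_mk_right u x
  have hgm : g ∈ s(u, v) := hg _ hm
  rw [Sym2.mem_iff] at hgm
  rcases hgm with rfl | rfl
  · exact Set.mem_insert _ _
  · exact Set.mem_insert_of_mem _ rfl

lemma adj_of_pair_extent_gr {n : ℕ} (hn : 3 ≤ n) (hcard : Fintype.card V = n)
    {u v : V} (hne : u ≠ v)
    (h : ({u, v} : Set V) ∈ Extents
      (fun (v : V) (a : V ⊕ Γ.edgeSet) =>
        Sum.elim (fun w => v = w) (fun e => v ∈ (e : Sym2 V)) a)) :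
    Γ.Adj u v := by
  by_contra hadj
  rw [Extents, Set.mem_setOf_eq] at h
  have huniv : ∀ g : V, g ∈ ({u, v} : Set V) := by
    intro g
    rw [← h]
    intro m hm
    rcases m with w | e
    · have h1 := hm u (Set.mem_insert _ _)
      have h2 := hm v (Set.mem_insert_of_mem _ rfl)
      simp only [Sum.elim_inl] at h1 h2
      exact absurd (h1.trans h2.symm) hne
    · have h1 := hm u (Set.mem_insert _ _)
      have h2 := hm v (Set.mem_insert_of_mem _ rfl)
      simp only [Sum.elim_inr] at h1 h2
      have he : (e : Sym2 V) = s(u, v) := (Sym2.mem_and_mem_iff hne).1 ⟨h1, h2⟩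
      have := e.2
      rw [he, SimpleGraph.mem_edgeSet] at this
      exact absurd this hadj
  have hsub : (Finset.univ : Finset V) ⊆ {u, v} := by
    intro x _
    have := huniv x
    simpa using this
  have hle := Finset.card_le_card hsub
  rw [Finset.card_univ, hcard] at hle
  have h2 : ({u, v} : Finset V).card ≤ 2 :=
    le_trans (Finset.card_insert_le u {v}) (by simp)
  omega

end GraphContext

end Aux

/-- Surjective scale-measure into the crown scale iff Hamiltonian cycle. -/
theorem stmt2 {V : Type*} [Fintype V] [DecidableEq V] (Γ : SimpleGraph V)
    {n : ℕ} (hn : 3 ≤ n) (hcard : Fintype.card V = n) :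
    (∃ σ : V → Fin n, Function.Surjective σ ∧
        IsScaleMeasure
          (fun (v : V) (a : V ⊕ Γ.edgeSet) =>
            Sum.elim (fun w => v = w) (fun e => v ∈ (e : Sym2 V)) a)
          (crownInc n) σ) ↔
      ∃ (v : V) (w : Γ.Walk v v), w.IsHamiltonianCycle := by
  haveI : NeZero n := ⟨by omega⟩
  constructor
  · rintro ⟨σ, hsurj, hsm⟩
    have hbij : Function.Bijective σ :=
      (Fintype.bijective_iff_surjective_and_card σ).2
        ⟨hsurj, by rw [hcard, Fintype.card_fin]⟩
    set e := Equiv.ofBijective σ hbij with he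
    have hadj : ∀ i : Fin n, Γ.Adj (e.symm i) (e.symm (i + 1)) := by
      intro i
      have hext := extent_mem_Extents' (Inc := crownInc n) {i + 1}
      have hpre := hsm _ hext
      have hset : σ ⁻¹' (extentOf (crownInc n) {i + 1}) = {e.symm i, e.symm (i + 1)} := by
        ext x
        simp only [Set.mem_preimage, extentOf, Set.mem_setOf_eq, Set.mem_singleton_iff,
          forall_eq, Set.mem_insert_iff]
        rw [crown_iff' hn]
        have hx : σ x = e x := rfl
        constructor
        · rintro (h | h)
          · right
            rw [Equiv.eq_symm_apply, ← hx]
            exact h.symm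
          · left
            rw [Equiv.eq_symm_apply, ← hx]
            exact add_right_cancel (a := σ x) (b := (1 : Fin n)) (c := i) h.symm
        · rintro (rfl | rfl)
          · right
            rw [hx, Equiv.apply_symm_apply]
          · left
            rw [hx, Equiv.apply_symm_apply]
      rw [hset] at hpre
      have hne : e.symm i ≠ e.symm (i + 1) := by
        intro hcontra
        exact fin_ne_add_one' hn i (e.symm.injective hcontra)
      exact adj_of_pair_extent_gr Γ hn hcard hne hpre
    exact exists_ham_of_cyclic hn hcard _ e.symm.bijective hadj
  · rintro ⟨v, w, hw⟩
    obtain ⟨τ, hbij, hadj⟩ := cyclic_of_ham hn hcard w hw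
    set e := Equiv.ofBijective τ hbij with he
    refine ⟨⇑e.symm, e.symm.surjective, ?_⟩
    intro A hA
    rw [Extents, Set.mem_setOf_eq] at hA
    rw [← hA, extentOf_eq_iInter', Set.preimage_iInter]
    apply iInter_mem_Extents'
    intro m
    have hτ : ∀ y : Fin n, τ y = e y := fun y => rfl
    have hpre : (⇑e.symm) ⁻¹' {g | crownInc n g m.1} = {τ (m.1 - 1), τ m.1} := by
      ext x
      simp only [Set.mem_preimage, Set.mem_setOf_eq, Set.mem_insert_iff,
        Set.mem_singleton_iff]
      rw [crown_iff' hn]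
      constructor
      · rintro (h | h)
        · right
          rw [hτ, h, Equiv.apply_symm_apply]
        · left
          rw [hτ]
          have : e.symm x = m.1 - 1 := by
            rw [eq_sub_iff_add_eq, ← h]
          rw [← this, Equiv.apply_symm_apply]
      · rintro (rfl | rfl)
        · right
          rw [hτ, Equiv.symm_apply_apply, sub_add_cancel]
        · left
          rw [hτ, Equiv.symm_apply_apply]
    rw [hpre]
    have hadjm : Γ.Adj (τ (m.1 - 1)) (τ m.1) := by
      have := hadj (m.1 - 1)
      rwa [sub_add_cancel] at this
    exact pair_mem_Extents_gr Γ hadjm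
end

section
/- Let Γ be a finite simple graph with vertex set V, |V| ≥ 3, and edge set E regarded as a set of 2-element subsets of V. Let K_Γ = (V, {{v} | v ∈ V} ∪ E, ∋) be the formal context whose objects are the vertices, whose attributes are the singleton vertex sets together with the edges, and where a vertex is incident with an attribute iff it is an element of it. Then Ext(K_Γ) = {∅, V} ∪ {{v} | v ∈ V} ∪ E. -/
/-- Extents of the vertex/edge incidence context of a graph. -/
theorem stmt3 {V : Type*} [Fintype V] (Γ : SimpleGraph V)
    (h3 : 3 ≤ Fintype.card V) :
    Extents (fun (v : V) (a : V ⊕ Γ.edgeSet) =>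
        Sum.elim (fun w => v = w) (fun e => v ∈ (e : Sym2 V)) a) =
      {∅, Set.univ} ∪ {A | ∃ v : V, A = {v}} ∪
        {A | ∃ e : Γ.edgeSet, A = {v | v ∈ (e : Sym2 V)}} := by
  classical
  have hsub : ∀ (A : Set V), A ⊆ closureK (fun (v : V) (a : V ⊕ Γ.edgeSet) =>
      Sum.elim (fun w => v = w) (fun e => v ∈ (e : Sym2 V)) a) A := by
    intro A g hg m hm
    exact hm g hg
  set Inc := fun (v : V) (a : V ⊕ Γ.edgeSet) =>
      Sum.elim (fun w => v = w) (fun e => v ∈ (e : Sym2 V)) a with hInc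
  have h2 : 1 < Fintype.card V := by omega
  ext A
  constructor
  · intro hA
    by_cases hemp : A = ∅
    · exact Or.inl (Or.inl (Or.inl hemp))
    obtain ⟨a, ha⟩ := Set.nonempty_iff_ne_empty.mpr hemp
    by_cases hsing : A ⊆ {a}
    · refine Or.inl (Or.inr ⟨a, ?_⟩)
      exact Set.Subset.antisymm hsing (Set.singleton_subset_iff.mpr ha)
    · obtain ⟨b, hb, hba⟩ := Set.not_subset.mp hsing
      simp only [Set.mem_singleton_iff] at hba
      -- A has two distinct elements a b
      by_cases hint : intentOf Inc A = ∅
      · refine Or.inl (Or.inl (Or.inr ?_))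
        rw [← hA]
        unfold closureK extentOf at *
        rw [hint]
        simp
      · obtain ⟨m, hm⟩ := Set.nonempty_iff_ne_empty.mpr hint
        cases m with
        | inl w =>
          exfalso
          have h1 := hm a ha
          have h2 := hm b hb
          simp only [hInc, Sum.elim_inl] at h1 h2
          exact hba (h2.trans h1.symm)
        | inr e =>
          refine Or.inr ⟨e, ?_⟩
          have hae : a ∈ (e : Sym2 V) := hm a ha
          have hbe : b ∈ (e : Sym2 V) := hm b hb
          rw [← hA]
          apply Set.Subset.antisymm
          · intro v hv
            exact hv (Sum.inr e) hm
          · intro v hv m' hm'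
            cases m' with
            | inl w =>
              exfalso
              have h1 := hm' a ha
              have h2 := hm' b hb
              simp only [hInc, Sum.elim_inl] at h1 h2
              exact hba (h2.trans h1.symm)
            | inr e' =>
              have hae' : a ∈ (e' : Sym2 V) := hm' a ha
              have hbe' : b ∈ (e' : Sym2 V) := hm' b hb
              have : (e : Sym2 V) = (e' : Sym2 V) :=
                Sym2.eq_of_ne_mem (Ne.symm hba) hae hbe hae' hbe'
              show v ∈ (e' : Sym2 V)
              rw [← this]; exact hv
  · intro h
    simp only [Set.mem_union, Set.mem_insert_iff, Set.mem_singleton_iff,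
      Set.mem_setOf_eq] at h
    obtain (((rfl | rfl) | ⟨v, rfl⟩) | ⟨e, rfl⟩) := h
    · -- empty set
      refine Set.Subset.antisymm ?_ (hsub _)
      intro g hg
      obtain ⟨w1, w2, hw⟩ := Fintype.exists_pair_of_one_lt_card h2
      exfalso
      have h1 : Inc g (Sum.inl w1) := hg (Sum.inl w1) (by intro x hx; cases hx)
      have h2' : Inc g (Sum.inl w2) := hg (Sum.inl w2) (by intro x hx; cases hx)
      simp only [hInc, Sum.elim_inl] at h1 h2'
      exact hw (h1 ▸ h2' ▸ rfl)
    · -- univ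
      refine Set.Subset.antisymm (fun g _ => trivial) (hsub _)
    · -- singleton
      refine Set.Subset.antisymm ?_ (hsub _)
      intro g hg
      have : Inc g (Sum.inl v) := hg (Sum.inl v) (by rintro x rfl; rfl)
      exact this
    · -- edge
      refine Set.Subset.antisymm ?_ (hsub _)
      intro g hg
      exact hg (Sum.inr e) (fun x hx => hx)
end

section
/- Let K = (G, M, I) be a finite formal context with |G| = n ≥ 3. There exists a surjective scale-measure from K into the crown scale C_n if and only if ∅ ∈ Ext(K), {g} ∈ Ext(K) for every g ∈ G, and there is an enumeration g_1, …, g_n of G such that {g_i, g_{i+1}} ∈ Ext(K) for all 1 ≤ i < n and {g_n, g_1} ∈ Ext(K). -/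
section AuxStmt4

lemma aux_subset_closure {G M : Type*} (Inc : G → M → Prop) (A : Set G) :
    A ⊆ extentOf Inc (intentOf Inc A) :=
  fun g hg m hm => hm g hg

lemma aux_extentOf_mem {G M : Type*} (Inc : G → M → Prop) (B : Set M) :
    extentOf Inc B ∈ Extents Inc := by
  apply Set.Subset.antisymm
  · exact fun g hg m hm => hg m (fun g' hg' => hg' m hm)
  · exact aux_subset_closure Inc _

lemma aux_univ_mem {G M : Type*} (Inc : G → M → Prop) :
    (Set.univ : Set G) ∈ Extents Inc := by
  have h : extentOf Inc (∅ : Set M) = Set.univ := by ext g; simp [extentOf]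
  rw [← h]; exact aux_extentOf_mem Inc ∅

lemma aux_crownInc_iff {n : ℕ} (a b : Fin n) :
    crownInc n a b ↔ ((a:ℕ) = b ∨ (b:ℕ) = (a:ℕ)+1 ∨ ((a:ℕ) = n-1 ∧ (b:ℕ) = 0)) := by
  simp [crownInc, Fin.ext_iff]

lemma aux_crown_empty {n : ℕ} (hn : 3 ≤ n) :
    (∅ : Set (Fin n)) ∈ Extents (crownInc n) := by
  have h : extentOf (crownInc n) (Set.univ : Set (Fin n)) = ∅ := by
    ext g
    simp only [extentOf, Set.mem_setOf_eq, Set.mem_empty_iff_false, iff_false]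
    intro h
    have h0 := (aux_crownInc_iff g ⟨0, by omega⟩).mp (h _ (Set.mem_univ _))
    have h1 := (aux_crownInc_iff g ⟨1, by omega⟩).mp (h _ (Set.mem_univ _))
    have h2 := (aux_crownInc_iff g ⟨2, by omega⟩).mp (h _ (Set.mem_univ _))
    simp only [Fin.val_mk] at h0 h1 h2
    have := g.isLt
    omega
  rw [← h]; exact aux_extentOf_mem _ _

lemma aux_crown_singleton {n : ℕ} (hn : 3 ≤ n) (j : Fin n) :
    ({j} : Set (Fin n)) ∈ Extents (crownInc n) := by
  have hj := j.isLt
  by_cases h : (j:ℕ) + 1 < n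
  · have heq : extentOf (crownInc n) {j, ⟨(j:ℕ)+1, h⟩} = {j} := by
      ext g
      have hg := g.isLt
      simp only [extentOf, Set.mem_setOf_eq, Set.mem_insert_iff, Set.mem_singleton_iff]
      constructor
      · intro hmem
        have h1 := (aux_crownInc_iff g j).mp (hmem j (Or.inl rfl))
        have h2 := (aux_crownInc_iff g ⟨(j:ℕ)+1, h⟩).mp (hmem _ (Or.inr rfl))
        simp only [Fin.val_mk] at h2
        rw [Fin.ext_iff]
        omega
      · rintro rfl m hm
        rcases hm with rfl | rfl
        · exact Or.inl rfl
        · exact Or.inr (Or.inl rfl)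
    rw [← heq]; exact aux_extentOf_mem _ _
  · have hj1 : (j:ℕ) = n - 1 := by omega
    have heq : extentOf (crownInc n) {j, ⟨0, by omega⟩} = {j} := by
      ext g
      have hg := g.isLt
      simp only [extentOf, Set.mem_setOf_eq, Set.mem_insert_iff, Set.mem_singleton_iff]
      constructor
      · intro hmem
        have h1 := (aux_crownInc_iff g j).mp (hmem j (Or.inl rfl))
        have h2 := (aux_crownInc_iff g ⟨0, by omega⟩).mp (hmem _ (Or.inr rfl))
        simp only [Fin.val_mk] at h2
        rw [Fin.ext_iff]
        omega
      · rintro rfl m hm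
        rcases hm with rfl | rfl
        · exact Or.inl rfl
        · exact Or.inr (Or.inr ⟨hj1, rfl⟩)
    rw [← heq]; exact aux_extentOf_mem _ _

lemma aux_crown_pair {n : ℕ} (hn : 3 ≤ n) (i : ℕ) (h : i + 1 < n) :
    ({⟨i, by omega⟩, ⟨i+1, h⟩} : Set (Fin n)) ∈ Extents (crownInc n) := by
  have heq : extentOf (crownInc n) {(⟨i+1, h⟩ : Fin n)} =
      ({⟨i, by omega⟩, ⟨i+1, h⟩} : Set (Fin n)) := by
    ext g
    have hg := g.isLt
    simp only [extentOf, Set.mem_setOf_eq, Set.mem_singleton_iff, Set.mem_insert_iff,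
      forall_eq]
    rw [aux_crownInc_iff, Fin.ext_iff, Fin.ext_iff]
    simp only [Fin.val_mk, and_true, true_and]
    omega
  rw [← heq]; exact aux_extentOf_mem _ _

lemma aux_crown_wrap {n : ℕ} (hn : 3 ≤ n) :
    ({⟨n-1, by omega⟩, ⟨0, by omega⟩} : Set (Fin n)) ∈ Extents (crownInc n) := by
  have heq : extentOf (crownInc n) {(⟨0, by omega⟩ : Fin n)} =
      ({⟨n-1, by omega⟩, ⟨0, by omega⟩} : Set (Fin n)) := by
    ext g
    have hg := g.isLt
    simp only [extentOf, Set.mem_setOf_eq, Set.mem_singleton_iff, Set.mem_insert_iff,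
      forall_eq]
    rw [aux_crownInc_iff, Fin.ext_iff, Fin.ext_iff]
    simp only [Fin.val_mk, and_true, true_and]
    omega
  rw [← heq]; exact aux_extentOf_mem _ _

lemma aux_crown_classify {n : ℕ} (hn : 3 ≤ n) {A : Set (Fin n)}
    (hA : A ∈ Extents (crownInc n)) :
    A = Set.univ ∨ ∃ a b : Fin n,
      (((b:ℕ) = (a:ℕ)+1) ∨ ((a:ℕ) = n-1 ∧ (b:ℕ) = 0)) ∧ A ⊆ {a, b} := by
  by_cases hB : intentOf (crownInc n) A = ∅
  · left
    have h : extentOf (crownInc n) (intentOf (crownInc n) A) = Set.univ := by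
      rw [hB]; ext g; simp [extentOf]
    rw [← hA, h]
  · right
    obtain ⟨m, hm⟩ := Set.nonempty_iff_ne_empty.mpr hB
    have hAsub : A ⊆ {g | crownInc n g m} := by
      intro g hg
      rw [← hA] at hg
      exact hg m hm
    have hmlt := m.isLt
    by_cases hm0 : (m:ℕ) = 0
    · refine ⟨⟨n-1, by omega⟩, m, Or.inr ⟨rfl, hm0⟩, ?_⟩
      intro g hg
      have hgm := (aux_crownInc_iff g m).mp (hAsub hg)
      have hg' := g.isLt
      simp only [Set.mem_insert_iff, Set.mem_singleton_iff, Fin.ext_iff, Fin.val_mk]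
      omega
    · refine ⟨⟨(m:ℕ)-1, by omega⟩, m, Or.inl (by simp only [Fin.val_mk]; omega), ?_⟩
      intro g hg
      have hgm := (aux_crownInc_iff g m).mp (hAsub hg)
      have hg' := g.isLt
      simp only [Set.mem_insert_iff, Set.mem_singleton_iff, Fin.ext_iff, Fin.val_mk]
      omega

end AuxStmt4

/-- Characterisation of surjective scale-measures into the crown scale. -/
theorem stmt4 {G M : Type*} [Finite G] [Finite M] (Inc : G → M → Prop)
    {n : ℕ} (hn : 3 ≤ n) (hcard : Nat.card G = n) :
    (∃ σ : G → Fin n, Function.Surjective σ ∧ IsScaleMeasure Inc (crownInc n) σ) ↔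
      (∅ ∈ Extents Inc ∧ (∀ g : G, ({g} : Set G) ∈ Extents Inc) ∧
        ∃ e : Fin n ≃ G,
          (∀ i : ℕ, (h : i + 1 < n) →
            ({e ⟨i, by omega⟩, e ⟨i + 1, h⟩} : Set G) ∈ Extents Inc) ∧
          ({e ⟨n - 1, by omega⟩, e ⟨0, by omega⟩} : Set G) ∈ Extents Inc) := by
  constructor
  · rintro ⟨σ, hsurj, hσ⟩
    have hcards : Nat.card G = Nat.card (Fin n) := by simp [hcard]
    have hbij : Function.Bijective σ :=
      (Nat.bijective_iff_surjective_and_card σ).mpr ⟨hsurj, hcards⟩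
    set E := Equiv.ofBijective σ hbij with hE
    have hEs : ∀ (x : G) (j : Fin n), σ x = j ↔ x = E.symm j := by
      intro x j
      constructor
      · intro hx
        have : E x = j := hx
        rw [← this, Equiv.symm_apply_apply]
      · rintro rfl
        exact E.apply_symm_apply j
    refine ⟨?_, ?_, E.symm, ?_, ?_⟩
    · have h := hσ ∅ (aux_crown_empty hn)
      simpa using h
    · intro g
      have h := hσ {σ g} (aux_crown_singleton hn (σ g))
      have hpre : σ ⁻¹' {σ g} = {g} := by
        ext x
        simp [Set.mem_preimage, hbij.injective.eq_iff]
      rwa [hpre] at h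
    · intro i hi
      have h := hσ _ (aux_crown_pair hn i hi)
      have hpre : σ ⁻¹' ({⟨i, by omega⟩, ⟨i+1, hi⟩} : Set (Fin n)) =
          {E.symm ⟨i, by omega⟩, E.symm ⟨i+1, hi⟩} := by
        ext x
        simp only [Set.mem_preimage, Set.mem_insert_iff, Set.mem_singleton_iff]
        rw [hEs, hEs]
      rwa [hpre] at h
    · have h := hσ _ (aux_crown_wrap hn)
      have hpre : σ ⁻¹' ({⟨n-1, by omega⟩, ⟨0, by omega⟩} : Set (Fin n)) =
          {E.symm ⟨n-1, by omega⟩, E.symm ⟨0, by omega⟩} := by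
        ext x
        simp only [Set.mem_preimage, Set.mem_insert_iff, Set.mem_singleton_iff]
        rw [hEs, hEs]
      rwa [hpre] at h
  · rintro ⟨hempty, hsing, e, hpair, hwrap⟩
    refine ⟨fun g => e.symm g, e.symm.surjective, ?_⟩
    intro A hA
    have hpre : (fun g => e.symm g) ⁻¹' A = e '' A :=
      (Equiv.image_eq_preimage_symm e A).symm
    rcases aux_crown_classify hn hA with rfl | ⟨a, b, hab, hsub⟩
    · rw [hpre, Set.image_univ, Equiv.range_eq_univ]
      exact aux_univ_mem Inc
    · have hkey : ({e a, e b} : Set G) ∈ Extents Inc := by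
        rcases hab with hab | ⟨ha, hb⟩
        · have h1 : (a:ℕ) + 1 < n := by have := b.isLt; omega
          have h := hpair (a:ℕ) h1
          have e1 : (⟨(a:ℕ), by omega⟩ : Fin n) = a := by
            simp only [Fin.ext_iff, Fin.val_mk]
          have e2 : (⟨(a:ℕ)+1, h1⟩ : Fin n) = b := by
            simp only [Fin.ext_iff, Fin.val_mk]; omega
          rwa [e1, e2] at h
        · have h := hwrap
          have e1 : (⟨n-1, by omega⟩ : Fin n) = a := by
            simp only [Fin.ext_iff, Fin.val_mk]; omega
          have e2 : (⟨0, by omega⟩ : Fin n) = b := by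
            simp only [Fin.ext_iff, Fin.val_mk]; omega
          rwa [e1, e2] at h
      by_cases ha : a ∈ A <;> by_cases hb : b ∈ A
      · have hAeq : A = {a, b} := by
          apply Set.Subset.antisymm hsub
          rintro x (rfl | rfl) <;> assumption
        rw [hpre, hAeq, Set.image_insert_eq, Set.image_singleton]
        exact hkey
      · have hAeq : A = {a} := by
          apply Set.Subset.antisymm
          · intro x hx
            rcases hsub hx with rfl | rfl
            · rfl
            · exact absurd hx hb
          · intro x hx
            rw [Set.mem_singleton_iff] at hx
            rw [hx]; exact ha
        rw [hpre, hAeq, Set.image_singleton]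
        exact hsing _
      · have hAeq : A = {b} := by
          apply Set.Subset.antisymm
          · intro x hx
            rcases hsub hx with rfl | rfl
            · exact absurd hx ha
            · rfl
          · intro x hx
            rw [Set.mem_singleton_iff] at hx
            rw [hx]; exact hb
        rw [hpre, hAeq, Set.image_singleton]
        exact hsing _
      · have hAeq : A = ∅ := by
          ext x
          simp only [Set.mem_empty_iff_false, iff_false]
          intro hx
          rcases hsub hx with rfl | rfl
          · exact ha hx
          · exact hb hx
        rw [hpre, hAeq, Set.image_empty]
        exact hempty
end

section
/- Let n ≥ 2 and let K = (G, M, I) be a finite formal context. If σ : G → [n] and τ : G → [n] are both bijective full scale-measures from K into the interordinal scale I_n, then either τ = σ, or τ(g) = n + 1 − σ(g) for all g ∈ G. Hence K admits at most two bijective full scale-measures into I_n. -/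
/-- A convexity predicate on subsets of `Fin n`. -/
def IsCvx {n : ℕ} (A : Set (Fin n)) : Prop :=
  ∀ x ∈ A, ∀ z ∈ A, ∀ y, x ≤ y → y ≤ z → y ∈ A

lemma cvx_of_extent {n : ℕ} {A : Set (Fin n)}
    (h : A ∈ Extents (interordinalInc n)) : IsCvx A := by
  intro x hx z hz y hxy hyz
  have hA : extentOf (interordinalInc n) (intentOf (interordinalInc n) A) = A := h
  rw [← hA]
  intro m hm
  cases m with
  | inl a =>
    have hz' := hm z hz
    simp only [interordinalInc, Sum.elim_inl] at hz' ⊢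
    exact le_trans hyz hz'
  | inr a =>
    have hx' := hm x hx
    simp only [interordinalInc, Sum.elim_inr] at hx' ⊢
    exact le_trans hx' hxy

lemma extent_of_cvx {n : ℕ} (hn : 2 ≤ n) {A : Set (Fin n)}
    (h : IsCvx A) : A ∈ Extents (interordinalInc n) := by
  show extentOf (interordinalInc n) (intentOf (interordinalInc n) A) = A
  apply Set.Subset.antisymm
  · intro g hg
    rcases A.eq_empty_or_nonempty with hA | hA
    · exfalso
      have h0 : interordinalInc n g (Sum.inl ⟨0, by omega⟩) := by
        apply hg; intro x hx; simp [hA] at hx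
      have h1 : interordinalInc n g (Sum.inr ⟨n - 1, by omega⟩) := by
        apply hg; intro x hx; simp [hA] at hx
      simp only [interordinalInc, Sum.elim_inl, Sum.elim_inr, Fin.le_def] at h0 h1
      omega
    · obtain ⟨u, hu, humin⟩ := Set.exists_min_image A id A.toFinite hA
      obtain ⟨v, hv, hvmax⟩ := Set.exists_max_image A id A.toFinite hA
      have hgv : g ≤ v := by
        have := hg (Sum.inl v) (by intro x hx; exact hvmax x hx)
        simpa [interordinalInc] using this
      have hug : u ≤ g := by
        have := hg (Sum.inr u) (by intro x hx; exact humin x hx)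
        simpa [interordinalInc] using this
      exact h u hu v hv g hug hgv
  · intro g hg m hm
    exact hm g hg

lemma image_extent_mem {G M : Type*} (Inc : G → M → Prop) {n : ℕ}
    (σ τ : G → Fin n) (hτb : Function.Bijective τ)
    (hσ : IsFullScaleMeasure Inc (interordinalInc n) σ)
    (hτ : IsFullScaleMeasure Inc (interordinalInc n) τ)
    {A : Set (Fin n)} (hA : A ∈ Extents (interordinalInc n)) :
    τ '' (σ ⁻¹' A) ∈ Extents (interordinalInc n) := by
  have h1 : σ ⁻¹' A ∈ Extents Inc := hσ.1 A hA
  rw [hτ.2] at h1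
  obtain ⟨B, hB, hBeq⟩ := h1
  have : τ '' (σ ⁻¹' A) = B := by
    rw [← hBeq]
    exact Set.image_preimage_eq B hτb.2
  rw [this]; exact hB

/-- A bijection of `Fin n` mapping convex sets to convex sets is the identity or
the order reversal. -/
lemma bij_cvx_id_or_rev {n : ℕ} (hn : 2 ≤ n) (f : Fin n → Fin n)
    (hf : Function.Bijective f)
    (hc : ∀ A : Set (Fin n), IsCvx A → IsCvx (f '' A)) :
    (∀ x, f x = x) ∨ (∀ x, f x = x.rev) := by
  classical
  set F : ℕ → ℕ := fun k => if h : k < n then (f ⟨k, h⟩).val else 0 with hF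
  have hFval : ∀ (k : ℕ) (h : k < n), F k = (f ⟨k, h⟩).val := fun k h => dif_pos h
  have hFlt : ∀ k, k < n → F k < n := by
    intro k h; rw [hFval k h]; exact (f ⟨k, h⟩).isLt
  have hFinj : ∀ a b, a < n → b < n → F a = F b → a = b := by
    intro a b ha hb hab
    rw [hFval a ha, hFval b hb] at hab
    have := hf.1 (Fin.ext hab)
    exact congrArg Fin.val this
  -- Step 1: the image of 0 is an endpoint.
  have hend : F 0 = 0 ∨ F 0 = n - 1 := by
    by_contra hcon
    push_neg at hcon
    obtain ⟨h0, h1⟩ := hcon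
    set z : Fin n := ⟨0, by omega⟩ with hz
    have hFz : F 0 = (f z).val := hFval 0 (by omega)
    have hc0 : 0 < (f z).val := by omega
    have hc1 : (f z).val < n - 1 := by
      have := hFlt 0 (by omega); omega
    have hzv : z.val = 0 := rfl
    have hA : IsCvx {x : Fin n | x ≠ z} := by
      intro x hx z' hz' y hxy hyz'
      simp only [Set.mem_setOf_eq] at hx ⊢
      intro hy
      apply hx
      apply Fin.ext
      have hy0 : y.val = 0 := by rw [hy, hzv]
      have := Fin.le_def.mp hxy
      rw [hzv]; omega
    have hIm := hc _ hA
    obtain ⟨u, hu⟩ := hf.2 ⟨(f z).val - 1, by omega⟩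
    obtain ⟨v, hv⟩ := hf.2 ⟨(f z).val + 1, by have := (f z).isLt; omega⟩
    have huv : (f u).val = (f z).val - 1 := by rw [hu]
    have hvv : (f v).val = (f z).val + 1 := by rw [hv]
    have huA : u ∈ {x : Fin n | x ≠ z} := by
      simp only [Set.mem_setOf_eq]
      intro h; rw [h] at huv; omega
    have hvA : v ∈ {x : Fin n | x ≠ z} := by
      simp only [Set.mem_setOf_eq]
      intro h; rw [h] at hvv; omega
    have hmem : f z ∈ f '' {x : Fin n | x ≠ z} :=
      hIm (f u) ⟨u, huA, rfl⟩ (f v) ⟨v, hvA, rfl⟩ (f z)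
        (by rw [Fin.le_def]; omega) (by rw [Fin.le_def]; omega)
    obtain ⟨w, hwA, hw⟩ := hmem
    exact hwA (hf.1 hw)
  -- Step 2: adjacent elements map to adjacent elements.
  have hadj : ∀ k : ℕ, k + 1 < n → F (k + 1) = F k + 1 ∨ F k = F (k + 1) + 1 := by
    intro k hk
    set p : Fin n := ⟨k, by omega⟩ with hpdef
    set q : Fin n := ⟨k + 1, hk⟩ with hqdef
    have hpv : p.val = k := rfl
    have hqv : q.val = k + 1 := rfl
    have hFp : F k = (f p).val := hFval k (by omega)
    have hFq : F (k + 1) = (f q).val := hFval (k + 1) hk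
    have hA : IsCvx {x : Fin n | x = p ∨ x = q} := by
      intro x hx z' hz' y hxy hyz'
      simp only [Set.mem_setOf_eq] at hx hz' ⊢
      have h1 := Fin.le_def.mp hxy
      have h2 := Fin.le_def.mp hyz'
      have hxv : x.val = k ∨ x.val = k + 1 := by
        rcases hx with h | h <;> rw [h] <;> [exact Or.inl hpv; exact Or.inr hqv]
      have hzv : z'.val = k ∨ z'.val = k + 1 := by
        rcases hz' with h | h <;> rw [h] <;> [exact Or.inl hpv; exact Or.inr hqv]
      have hyv : y.val = k ∨ y.val = k + 1 := by omega
      rcases hyv with h | h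
      · left; apply Fin.ext; rw [h, hpv]
      · right; apply Fin.ext; rw [h, hqv]
    have hIm := hc _ hA
    have hpq : (f p).val ≠ (f q).val := by
      intro h
      have := congrArg Fin.val (hf.1 (Fin.ext h))
      rw [hpv, hqv] at this
      omega
    have hpm : f p ∈ f '' {x : Fin n | x = p ∨ x = q} := ⟨p, Or.inl rfl, rfl⟩
    have hqm : f q ∈ f '' {x : Fin n | x = p ∨ x = q} := ⟨q, Or.inr rfl, rfl⟩
    rcases Nat.lt_or_ge (f p).val (f q).val with hlt | hge
    · left
      by_contra hne
      rw [hFp, hFq] at hne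
      have hmid : (⟨(f p).val + 1, by omega⟩ : Fin n) ∈
          f '' {x : Fin n | x = p ∨ x = q} := by
        apply hIm (f p) hpm (f q) hqm
        · simp [Fin.le_def]
        · simp [Fin.le_def]; omega
      obtain ⟨w, hwA, hw⟩ := hmid
      have hwv : (f w).val = (f p).val + 1 := by rw [hw]
      simp only [Set.mem_setOf_eq] at hwA
      rcases hwA with h | h <;> rw [h] at hwv <;> omega
    · right
      have hlt' : (f q).val < (f p).val := by omega
      by_contra hne
      rw [hFp, hFq] at hne
      have hmid : (⟨(f q).val + 1, by omega⟩ : Fin n) ∈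
          f '' {x : Fin n | x = p ∨ x = q} := by
        apply hIm (f q) hqm (f p) hpm
        · simp [Fin.le_def]
        · simp [Fin.le_def]; omega
      obtain ⟨w, hwA, hw⟩ := hmid
      have hwv : (f w).val = (f q).val + 1 := by rw [hw]
      simp only [Set.mem_setOf_eq] at hwA
      rcases hwA with h | h <;> rw [h] at hwv <;> omega
  -- Step 3: conclude by induction.
  rcases hend with h0 | h0
  · left
    have main : ∀ k : ℕ, k < n → F k = k := by
      intro k
      induction k using Nat.strong_induction_on with
      | _ k ih =>
        match k, ih with
        | 0, _ => intro _; exact h0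
        | k + 1, ih =>
          intro hk
          have hik : F k = k := ih k (by omega) (by omega)
          rcases hadj k hk with h | h
          · omega
          · exfalso
            rcases Nat.eq_zero_or_pos k with rfl | hkpos
            · omega
            · have hik' : F (k - 1) = k - 1 := ih (k - 1) (by omega) (by omega)
              have : k + 1 = k - 1 := hFinj _ _ hk (by omega) (by omega)
              omega
    intro x
    apply Fin.ext
    have hm := main x.val x.isLt
    rw [hFval x.val x.isLt] at hm
    rwa [Fin.eta] at hm
  · right
    have main : ∀ k : ℕ, k < n → F k = n - 1 - k := by
      intro k
      induction k using Nat.strong_induction_on with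
      | _ k ih =>
        match k, ih with
        | 0, _ => intro _; omega
        | k + 1, ih =>
          intro hk
          have hik : F k = n - 1 - k := ih k (by omega) (by omega)
          have hlt := hFlt (k + 1) hk
          rcases hadj k hk with h | h
          · exfalso
            rcases Nat.eq_zero_or_pos k with rfl | hkpos
            · omega
            · have hik' : F (k - 1) = n - 1 - (k - 1) := ih (k - 1) (by omega) (by omega)
              have : k + 1 = k - 1 := hFinj _ _ hk (by omega) (by omega)
              omega
          · omega
    intro x
    apply Fin.ext
    have hm := main x.val x.isLt
    rw [hFval x.val x.isLt] at hm
    rw [Fin.eta] at hm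
    rw [Fin.val_rev]
    omega

lemma key_lemma {G M : Type*} (Inc : G → M → Prop) {n : ℕ} (hn : 2 ≤ n)
    (σ τ : G → Fin n)
    (hσb : Function.Bijective σ) (hτb : Function.Bijective τ)
    (hσ : IsFullScaleMeasure Inc (interordinalInc n) σ)
    (hτ : IsFullScaleMeasure Inc (interordinalInc n) τ) :
    τ = σ ∨ ∀ g : G, τ g = (σ g).rev := by
  set e : G ≃ Fin n := Equiv.ofBijective σ hσb with he
  set f : Fin n → Fin n := τ ∘ e.symm with hfdef
  have hfb : Function.Bijective f := hτb.comp e.symm.bijective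
  have hpre : ∀ A : Set (Fin n), f '' A = τ '' (σ ⁻¹' A) := by
    intro A
    have : e.symm '' A = σ ⁻¹' A := by
      ext x
      constructor
      · rintro ⟨a, ha, rfl⟩
        simp only [Set.mem_preimage]
        have : σ (e.symm a) = e (e.symm a) := rfl
        rw [this, Equiv.apply_symm_apply]
        exact ha
      · intro hx
        exact ⟨σ x, hx, by
          have : σ x = e x := rfl
          rw [this, Equiv.symm_apply_apply]⟩
    rw [hfdef, Set.image_comp, this]
  have hc : ∀ A : Set (Fin n), IsCvx A → IsCvx (f '' A) := by
    intro A hA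
    rw [hpre]
    exact cvx_of_extent (image_extent_mem Inc σ τ hτb hσ hτ (extent_of_cvx hn hA))
  have hfσ : ∀ g : G, f (σ g) = τ g := by
    intro g
    show τ (e.symm (σ g)) = τ g
    congr 1
    have : σ g = e g := rfl
    rw [this, Equiv.symm_apply_apply]
  rcases bij_cvx_id_or_rev hn f hfb hc with h | h
  · left
    funext g
    rw [← hfσ g, h]
  · right
    intro g
    rw [← hfσ g, h]

/-- Rigidity of bijective full scale-measures into the interordinal scale. -/
theorem stmt8 {G M : Type*} [Finite G] [Finite M] (Inc : G → M → Prop)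
    {n : ℕ} (hn : 2 ≤ n) (σ τ : G → Fin n)
    (hσb : Function.Bijective σ) (hτb : Function.Bijective τ)
    (hσ : IsFullScaleMeasure Inc (interordinalInc n) σ)
    (hτ : IsFullScaleMeasure Inc (interordinalInc n) τ) :
    (τ = σ ∨ ∀ g : G, τ g = (σ g).rev) ∧
      {ρ : G → Fin n | Function.Bijective ρ ∧
        IsFullScaleMeasure Inc (interordinalInc n) ρ}.ncard ≤ 2 := by
  constructor
  · exact key_lemma Inc hn σ τ hσb hτb hσ hτ
  · have hsub : {ρ : G → Fin n | Function.Bijective ρ ∧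
        IsFullScaleMeasure Inc (interordinalInc n) ρ} ⊆
        {σ, fun g => (σ g).rev} := by
      rintro ρ ⟨hρb, hρf⟩
      rcases key_lemma Inc hn σ ρ hσb hρb hσ hρf with h | h
      · exact Or.inl h
      · exact Or.inr (funext h)
    calc {ρ : G → Fin n | Function.Bijective ρ ∧
        IsFullScaleMeasure Inc (interordinalInc n) ρ}.ncard
        ≤ ({σ, fun g => (σ g).rev} : Set (G → Fin n)).ncard :=
          Set.ncard_le_ncard hsub (Set.toFinite _)
      _ ≤ ({(fun g => (σ g).rev)} : Set (G → Fin n)).ncard + 1 :=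
          Set.ncard_insert_le _ _
      _ ≤ 2 := by rw [Set.ncard_singleton]
end

section
/- Let n ≥ 2. A permutation π of [n] satisfies {π⁻¹(A) | A ∈ Ext(I_n)} = Ext(I_n), where I_n is the interordinal scale, if and only if π is the identity or π(i) = n + 1 − i for all i ∈ [n]. -/
lemma mem_extents_iff {n : ℕ} (hn : 2 ≤ n) (A : Set (Fin n)) :
    A ∈ Extents (interordinalInc n) ↔ A.OrdConnected := by
  constructor
  · intro hA
    constructor
    intro x hx y hy z hz
    have hz' : z ∈ extentOf (interordinalInc n) (intentOf (interordinalInc n) A) := by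
      intro m hm
      cases m with
      | inl a => exact le_trans hz.2 (hm y hy)
      | inr a => exact le_trans (hm x hx) hz.1
    rwa [hA] at hz'
  · intro hA
    apply subset_antisymm
    · rcases A.eq_empty_or_nonempty with rfl | hne
      · intro g hg
        have h1 : g ≤ (⟨0, by omega⟩ : Fin n) :=
          hg (Sum.inl ⟨0, by omega⟩) (fun x hx => hx.elim)
        have h2 : (⟨n - 1, by omega⟩ : Fin n) ≤ g :=
          hg (Sum.inr ⟨n - 1, by omega⟩) (fun x hx => hx.elim)
        rw [Fin.le_def] at h1 h2
        simp only [Set.mem_empty_iff_false]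
        simp at h1 h2
        omega
      · obtain ⟨Mx, hMx, hMx'⟩ := A.toFinite.exists_maximal hne
        obtain ⟨mx, hmx, hmx'⟩ := A.toFinite.exists_minimal hne
        have hMle : ∀ x ∈ A, x ≤ Mx :=
          fun a ha => le_of_not_gt fun hlt => hlt.not_ge (hMx' ha hlt.le)
        have hmle : ∀ x ∈ A, mx ≤ x :=
          fun a ha => le_of_not_gt fun hlt => (hlt.not_ge (hmx' ha hlt.le))
        intro g hg
        have hgM : g ≤ Mx := hg (Sum.inl Mx) (fun x hx => hMle x hx)
        have hmg : mx ≤ g := hg (Sum.inr mx) (fun x hx => hmle x hx)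
        exact hA.out hmx hMx ⟨hmg, hgM⟩
    · intro g hg m hm
      exact hm g hg

lemma pair_adj {n : ℕ} {u v : Fin n} (hA : Set.OrdConnected {u, v}) (huv : u < v) :
    (v : ℕ) = (u : ℕ) + 1 := by
  have hv := v.isLt
  have huv' : (u : ℕ) < v := huv
  have hz : (⟨(u : ℕ) + 1, by omega⟩ : Fin n) ∈ ({u, v} : Set (Fin n)) :=
    hA.out (Set.mem_insert _ _) (Set.mem_insert_of_mem _ rfl)
      ⟨by simp [Fin.le_def], by simp [Fin.le_def]; omega⟩
  rcases hz with h | h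
  · exact absurd (congrArg Fin.val h) (by simp)
  · have := congrArg Fin.val h
    simp at this
    omega

/-- Permutations preserving the extents of the interordinal scale. -/
theorem stmt9 {n : ℕ} (hn : 2 ≤ n) (π : Equiv.Perm (Fin n)) :
    (fun A => ⇑π ⁻¹' A) '' Extents (interordinalInc n) = Extents (interordinalInc n) ↔
      ((∀ i, π i = i) ∨ (∀ i : Fin n, π i = i.rev)) := by
  rw [show Extents (interordinalInc n) = {A : Set (Fin n) | A.OrdConnected} from
    Set.ext fun A => mem_extents_iff hn A]
  constructor
  · intro h
    -- images of ord-connected sets are ord-connected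
    have h2 : ∀ B : Set (Fin n), B.OrdConnected → (⇑π '' B).OrdConnected := by
      intro B hB
      have hB' : B ∈ {A : Set (Fin n) | A.OrdConnected} := hB
      rw [← h] at hB'
      obtain ⟨A, hA, hpre⟩ := hB'
      have : ⇑π '' B = A := by
        rw [← hpre, Set.image_preimage_eq _ π.surjective]
      rwa [this]
    -- adjacency
    have adj : ∀ k (hk : k + 1 < n),
        ((π ⟨k + 1, hk⟩ : Fin n) : ℕ) = ((π ⟨k, by omega⟩ : Fin n) : ℕ) + 1 ∨
        ((π ⟨k, by omega⟩ : Fin n) : ℕ) = ((π ⟨k + 1, hk⟩ : Fin n) : ℕ) + 1 := by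
      intro k hk
      set i : Fin n := ⟨k, by omega⟩ with hi
      set j : Fin n := ⟨k + 1, hk⟩ with hj
      have hij : ({i, j} : Set (Fin n)).OrdConnected := by
        constructor
        intro x hx y hy z hz
        have hz1 := hz.1; have hz2 := hz.2
        rw [Fin.le_def] at hz1 hz2
        simp only [Set.mem_insert_iff, Set.mem_singleton_iff, Fin.ext_iff] at hx hy ⊢
        rcases hx with hx | hx <;> rcases hy with hy | hy <;> simp only [hi, hj, Fin.val_mk] at hx hy ⊢ <;> omega
      have himg : (⇑π '' {i, j}).OrdConnected := h2 _ hij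
      rw [Set.image_insert_eq, Set.image_singleton] at himg
      rcases lt_trichotomy (π i) (π j) with hlt | heq | hgt
      · exact Or.inl (pair_adj himg hlt)
      · exact absurd (π.injective heq) (by simp [hi, hj, Fin.ext_iff])
      · have himg' : ({π j, π i} : Set (Fin n)).OrdConnected := by
          rwa [Set.pair_comm]
        exact Or.inr (pair_adj himg' hgt)
    set p0 : ℕ := ((π ⟨0, by omega⟩ : Fin n) : ℕ) with hp0
    rcases adj 0 (by omega) with step0 | step0
    · -- increasing case
      left
      have claim : ∀ k, ∀ hk : k < n, ((π ⟨k, hk⟩ : Fin n) : ℕ) = p0 + k := by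
        intro k
        induction k using Nat.strong_induction_on with
        | _ k ih =>
          intro hk
          match k with
          | 0 => rw [hp0]; rfl
          | 1 =>
            have step0' : ((π ⟨1, hk⟩ : Fin n) : ℕ) = ((π ⟨0, by omega⟩ : Fin n) : ℕ) + 1 :=
              step0
            rw [hp0]; exact step0'
          | (m + 2) =>
            have h1 := ih (m + 1) (by omega) (by omega)
            have h0 := ih m (by omega) (by omega)
            have hstep2 :
                ((π ⟨m + 2, hk⟩ : Fin n) : ℕ) = ((π ⟨m + 1, by omega⟩ : Fin n) : ℕ) + 1 ∨
                ((π ⟨m + 1, by omega⟩ : Fin n) : ℕ) = ((π ⟨m + 2, hk⟩ : Fin n) : ℕ) + 1 :=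
              adj (m + 1) hk
            rcases hstep2 with hstep | hstep
            · omega
            · exfalso
              have hvv : ((π ⟨m + 2, hk⟩ : Fin n) : ℕ) = ((π ⟨m, by omega⟩ : Fin n) : ℕ) := by
                omega
              have := π.injective (Fin.val_injective hvv)
              simp [Fin.ext_iff] at this
      have hlast := claim (n - 1) (by omega)
      have hlt := (π ⟨n - 1, by omega⟩).isLt
      have hp00 : p0 = 0 := by omega
      intro i
      have := claim i i.isLt
      apply Fin.val_injective
      simpa [hp00] using this
    · -- decreasing case
      right
      have claim : ∀ k, ∀ hk : k < n, ((π ⟨k, hk⟩ : Fin n) : ℕ) + k = p0 := by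
        intro k
        induction k using Nat.strong_induction_on with
        | _ k ih =>
          intro hk
          match k with
          | 0 => rw [hp0]; rfl
          | 1 =>
            have step0' : ((π ⟨0, by omega⟩ : Fin n) : ℕ) = ((π ⟨1, hk⟩ : Fin n) : ℕ) + 1 :=
              step0
            rw [hp0]; omega
          | (m + 2) =>
            have h1 := ih (m + 1) (by omega) (by omega)
            have h0 := ih m (by omega) (by omega)
            have hstep2 :
                ((π ⟨m + 2, hk⟩ : Fin n) : ℕ) = ((π ⟨m + 1, by omega⟩ : Fin n) : ℕ) + 1 ∨
                ((π ⟨m + 1, by omega⟩ : Fin n) : ℕ) = ((π ⟨m + 2, hk⟩ : Fin n) : ℕ) + 1 :=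
              adj (m + 1) hk
            rcases hstep2 with hstep | hstep
            · exfalso
              have hvv : ((π ⟨m + 2, hk⟩ : Fin n) : ℕ) = ((π ⟨m, by omega⟩ : Fin n) : ℕ) := by
                omega
              have := π.injective (Fin.val_injective hvv)
              simp [Fin.ext_iff] at this
            · omega
      have hlast := claim (n - 1) (by omega)
      have hlt0 : p0 < n := (π ⟨0, by omega⟩).isLt
      have hp0n : p0 = n - 1 := by omega
      intro i
      have := claim i i.isLt
      apply Fin.val_injective
      rw [Fin.val_rev]
      have hi := i.isLt
      simp at this
      omega
  · rintro (h | h)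
    · have hid : ⇑π = id := funext h
      rw [hid]
      simp
    · have hπ : ⇑π = Fin.rev := funext h
      rw [hπ]
      have hrev : ∀ A : Set (Fin n), A.OrdConnected → (Fin.rev ⁻¹' A).OrdConnected := by
        intro A hA
        constructor
        intro x hx y hy z hz
        exact hA.out hy hx ⟨Fin.rev_le_rev.2 hz.2, Fin.rev_le_rev.2 hz.1⟩
      apply subset_antisymm
      · rintro B ⟨A, hA, rfl⟩
        exact hrev A hA
      · intro B hB
        exact ⟨Fin.rev ⁻¹' B, hrev B hB, by ext x; simp [Fin.rev_rev]⟩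
end

section
/- Let K = (G, M, I) be a finite formal context and H ⊆ G with |H| = n. If there exists a bijective local full scale-measure σ : H → [n] from K into the contranominal scale B_n, then for every nonempty H' ⊆ H with |H'| = k there exists a bijective local full scale-measure from K (with domain H') into the contranominal scale B_k. -/
lemma contra_extents (n : ℕ) : Extents (contranominalInc n) = Set.univ := by
  ext A
  simp only [Extents, Set.mem_setOf_eq, Set.mem_univ, iff_true]
  ext g
  constructor
  · intro hg
    by_contra hgA
    exact hg g (fun x hx e => hgA (e ▸ hx)) rfl
  · intro hg m hm
    exact hm g hg

/-- Heredity of local full scale-measures into contranominal scales. -/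
theorem stmt16 {G M : Type*} [Finite G] [Finite M] (Inc : G → M → Prop)
    (H : Set G) {n : ℕ} (hcard : H.ncard = n)
    (σ : ↥H → Fin n) (hb : Function.Bijective σ)
    (h : IsLocalFullScaleMeasure Inc H (contranominalInc n) σ) :
    ∀ H' ⊆ H, ∀ k : ℕ, H'.Nonempty → H'.ncard = k →
      ∃ τ : ↥H' → Fin k, Function.Bijective τ ∧
        IsLocalFullScaleMeasure Inc H' (contranominalInc k) τ := by
  intro H' hsub k hne hcardk
  -- every subset of H is an extent of K[H,M]
  have hallH : Extents (subInc Inc H) = Set.univ := by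
    have h2 := h.2
    rw [contra_extents] at h2
    ext S
    simp only [Set.mem_univ, iff_true]
    rw [h2]
    exact ⟨σ '' S, Set.mem_univ _, by simp [Set.preimage_image_eq _ hb.1]⟩
  have hextH : ∀ T : Set ↥H, T ∈ Extents (subInc Inc H) := by
    intro T; rw [hallH]; trivial
  -- every subset of H' is an extent of K[H',M]
  have hallH' : Extents (subInc Inc H') = Set.univ := by
    ext S
    simp only [Set.mem_univ, iff_true, Extents, Set.mem_setOf_eq]
    set ι : ↥H' → ↥H := fun x => ⟨x.1, hsub x.2⟩ with hι
    have hιinj : Function.Injective ι := by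
      intro a b hab
      have h1 : (ι a).1 = (ι b).1 := congrArg Subtype.val hab
      exact Subtype.ext h1
    have hT := hextH (ι '' S)
    simp only [Extents, Set.mem_setOf_eq] at hT
    ext x
    constructor
    · intro hx
      have hmem : ι x ∈ ι '' S := by
        rw [← hT]
        intro m hm
        exact hx m (fun g hg => hm (ι g) ⟨g, hg, rfl⟩)
      rcases hmem with ⟨y, hy, hyx⟩
      rwa [← hιinj hyx]
    · intro hx m hm
      exact hm x hx
  -- build a bijection H' ≃ Fin k
  have hfin : Fintype ↥H' := Fintype.ofFinite _
  have hcard' : Fintype.card ↥H' = k := by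
    rw [← Nat.card_eq_fintype_card, Nat.card_coe_set_eq, hcardk]
  let e := Fintype.equivFinOfCardEq hcard'
  refine ⟨e, e.bijective, ?_, ?_⟩
  · intro A _
    rw [hallH']; trivial
  · rw [hallH', contra_extents]
    ext S
    simp only [Set.mem_univ, true_iff, Set.image_univ, Set.mem_range]
    exact ⟨e '' S, by simp [Set.preimage_image_eq _ e.injective]⟩
end
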